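/- Let ℓ be an oriented line in ℝ², and let D and D' be closed disks (of radii ρ and ρ') whose centers lie strictly to the left of ℓ. If D' ∩ ℓ ⊆ D ∩ ℓ and there exists a point p ∈ D' \ D lying strictly to the right of ℓ, then ρ' < ρ. -/

import Mathlib

set_option maxHeartbeats 800000


/-!
STATEMENT 4: Let ℓ be an oriented line in ℝ², and let D and D' be closed disks
(of radii ρ and ρ') whose centers lie strictly to the left of ℓ.  If
D' ∩ ℓ ⊆ D ∩ ℓ and there exists a point p ∈ D' \ D lying strictly to the right of
ℓ, then ρ' < ρ.

The oriented line is given by a point `a` on it and a direction vector `d ≠ 0`;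
`sideVal a d x` is positive iff `x` lies strictly to the left of the oriented
line, negative iff strictly to the right, and zero iff `x` is on the line.
-/

noncomputable section

abbrev Pt := EuclideanSpace ℝ (Fin 2)

/-- The cross product of the direction `d` with `x - a`; its sign tells on which
side of the oriented line through `a` with direction `d` the point `x` lies. -/
def sideVal (a d x : Pt) : ℝ :=
  d 0 * (x 1 - a 1) - d 1 * (x 0 - a 0)

private lemma key (u h u' h' t y R R' : ℝ)
    (hh : 0 < h) (hh' : 0 < h') (hy : y < 0)
    (hR : 0 ≤ R) (hR' : 0 ≤ R') (hRR' : R ≤ R')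
    (hyp1 : (t - u')^2 + (y - h')^2 ≤ R'^2)
    (hyp2 : ∀ s : ℝ, (s - u')^2 + h'^2 ≤ R'^2 → (s - u)^2 + h^2 ≤ R^2) :
    (t - u)^2 + (y - h)^2 ≤ R^2 := by
  have hh'R' : h'^2 ≤ R'^2 := by nlinarith [sq_nonneg (t - u')]
  set r' := Real.sqrt (R'^2 - h'^2) with hr'def
  have hr'0 : 0 ≤ r' := Real.sqrt_nonneg _
  have hr'sq : r'^2 = R'^2 - h'^2 := Real.sq_sqrt (by linarith)
  have e1 := hyp2 (u' + r') (by nlinarith)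
  have e2 := hyp2 (u' - r') (by nlinarith)
  have hhR : h^2 ≤ R^2 := by nlinarith [sq_nonneg (u' + r' - u)]
  set r := Real.sqrt (R^2 - h^2) with hrdef
  have hr0 : 0 ≤ r := Real.sqrt_nonneg _
  have hrsq : r^2 = R^2 - h^2 := Real.sq_sqrt (by linarith)
  have hgap1 : u' + r' - u ≤ r := by nlinarith
  have hgap2 : u - (u' - r') ≤ r := by nlinarith
  have hrr' : r' ≤ r := by linarith
  have hsq : h^2 ≤ h'^2 := by
    nlinarith [mul_self_nonneg (R'-R), mul_self_nonneg (r-r'),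
      mul_le_mul hRR' hRR' hR hR', mul_le_mul hrr' hrr' hr'0 hr0]
  have hhh' : h ≤ h' := by nlinarith
  set A := |t - u'| with hAdef
  have hA0 : 0 ≤ A := abs_nonneg _
  have hA2 : A^2 ≤ r'^2 + 2*y*h' - y^2 := by
    rw [hAdef, sq_abs]; nlinarith
  have hAr' : A ≤ r' := by nlinarith
  have htu : |t - u| ≤ A + (r - r') := by
    have h1 : |t - u| ≤ |t - u'| + |u' - u| := by
      calc |t - u| = |(t - u') + (u' - u)| := by ring_nf
        _ ≤ |t - u'| + |u' - u| := abs_add_le _ _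
    have h2 : |u' - u| ≤ r - r' := abs_le.2 ⟨by linarith, by linarith⟩
    linarith
  have htu2 : (t - u)^2 ≤ (A + (r - r'))^2 := by
    have := abs_nonneg (t - u)
    nlinarith [sq_abs (t - u)]
  nlinarith [mul_nonneg (sub_nonneg.2 hAr') (sub_nonneg.2 hrr'),
    mul_nonneg (neg_nonneg.2 hy.le) (sub_nonneg.2 hhh')]

private lemma dist_sq_eq (x y : Pt) :
    dist x y ^ 2 = (x 0 - y 0)^2 + (x 1 - y 1)^2 := by
  rw [EuclideanSpace.dist_eq, Real.sq_sqrt (by positivity)]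
  simp [Fin.sum_univ_two, Real.dist_eq, sq_abs]

theorem disk_radius_comparison (a d : Pt) (hd : d ≠ 0)
    (c c' p : Pt) (ρ ρ' : ℝ) (hρ : 0 ≤ ρ) (hρ' : 0 ≤ ρ')
    (hc : 0 < sideVal a d c) (hc' : 0 < sideVal a d c')
    (hsub : Metric.closedBall c' ρ' ∩ {x : Pt | sideVal a d x = 0} ⊆
            Metric.closedBall c ρ ∩ {x : Pt | sideVal a d x = 0})
    (hp₁ : p ∈ Metric.closedBall c' ρ') (hp₂ : p ∉ Metric.closedBall c ρ)
    (hp₃ : sideVal a d p < 0) :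
    ρ' < ρ := by
  by_contra hcon
  push_neg at hcon
  -- coordinates along and across the line
  set D2 : ℝ := d 0 ^ 2 + d 1 ^ 2 with hD2def
  have hd0 : ¬ (d 0 = 0 ∧ d 1 = 0) := by
    rintro ⟨h0, h1⟩
    apply hd
    ext i
    fin_cases i <;> simp [h0, h1]
  have hD2 : 0 < D2 := by
    by_contra hle
    push_neg at hle
    have h0 : d 0 ^ 2 = 0 := le_antisymm (by nlinarith [sq_nonneg (d 1)]) (sq_nonneg _)
    have h1 : d 1 ^ 2 = 0 := le_antisymm (by nlinarith [sq_nonneg (d 0)]) (sq_nonneg _)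
    exact hd0 ⟨pow_eq_zero_iff two_ne_zero |>.1 h0, pow_eq_zero_iff two_ne_zero |>.1 h1⟩
  set δ : ℝ := Real.sqrt D2 with hδdef
  have hδ : 0 < δ := Real.sqrt_pos.2 hD2
  have hδsq : δ^2 = D2 := Real.sq_sqrt hD2.le
  set T : Pt → ℝ := fun x => d 0 * (x 0 - a 0) + d 1 * (x 1 - a 1) with hTdef
  have lagrange : ∀ x y : Pt,
      (T x - T y)^2 + (sideVal a d x - sideVal a d y)^2 = D2 * dist x y ^ 2 := by
    intro x y
    rw [dist_sq_eq]
    simp only [hTdef, sideVal, hD2def]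
    ring
  -- membership translations
  have mem_iff : ∀ (x z : Pt) (ρ₀ : ℝ), 0 ≤ ρ₀ →
      (x ∈ Metric.closedBall z ρ₀ ↔
        (T x - T z)^2 + (sideVal a d x - sideVal a d z)^2 ≤ (δ * ρ₀)^2) := by
    intro x z ρ₀ hρ₀
    rw [Metric.mem_closedBall, lagrange x z]
    have hsq : (δ * ρ₀)^2 = D2 * ρ₀^2 := by rw [mul_pow, hδsq]
    rw [hsq]
    constructor
    · intro hle
      have h1 := dist_nonneg (x := x) (y := z)
      have h2 : dist x z ^ 2 ≤ ρ₀ ^ 2 := by nlinarith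
      nlinarith
    · intro hle
      have h1 := dist_nonneg (x := x) (y := z)
      have h2 : dist x z ^ 2 ≤ ρ₀ ^ 2 := le_of_mul_le_mul_left (by linarith) hD2
      nlinarith
  -- apply the key lemma
  have hmain : (T p - T c)^2 + (sideVal a d p - sideVal a d c)^2 ≤ (δ * ρ)^2 := by
    apply key (T c) (sideVal a d c) (T c') (sideVal a d c') (T p) (sideVal a d p)
      (δ * ρ) (δ * ρ') hc hc' hp₃ (by positivity) (by positivity)
      (by nlinarith)
    · exact (mem_iff p c' ρ' hρ').1 hp₁
    · intro s hs
      -- the point on the line with T-coordinate s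
      set x : Pt := a + (s / D2) • d with hxdef
      have hx0 : x 0 = a 0 + (s / D2) * d 0 := rfl
      have hx1 : x 1 = a 1 + (s / D2) * d 1 := rfl
      have hTx : T x = s := by
        simp only [hTdef, hx0, hx1]
        field_simp
        ring
      have hSx : sideVal a d x = 0 := by
        simp only [sideVal, hx0, hx1]; ring
      have hx' : x ∈ Metric.closedBall c' ρ' := by
        rw [mem_iff x c' ρ' hρ', hTx, hSx]
        simpa using hs
      have hx : x ∈ Metric.closedBall c ρ := (hsub ⟨hx', hSx⟩).1
      have := (mem_iff x c ρ hρ).1 hx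
      rw [hTx, hSx] at this
      simpa using this
  exact hp₂ ((mem_iff p c ρ hρ).2 hmain)
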